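/- Let α > -1, let n ≥ 1 be an integer, let a, c ∈ ℝ and b ∈ 𝔻, and suppose φ : 𝔻 → 𝔻 is the analytic self-map given by φ(z) = b + cz/(1 - conj(b)·z) and ψ(z) = a·z^n / (1 - conj(b)·z)^{n+α+2} for z ∈ 𝔻. Then for all z, w ∈ 𝔻, p·z^n·conj(ψ(w)) / (1 - z·conj(φ(w)))^{n+α+2} = p·conj(w)^n·ψ(z) / (1 - conj(w)·φ(z))^{n+α+2}; in fact both sides equal a·p·(z·conj(w))^n / (1 - conj(b)·z - b·conj(w) + |b|²·conj(w)·z - c·conj(w)·z)^{n+α+2}. -/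

import Mathlib

open ComplexConjugate

lemma mul_cpow_pos_re {x y : ℂ} (hx : 0 < x.re) (hy : 0 < y.re) (s : ℂ) :
    (x * y) ^ s = x ^ s * y ^ s := by
  have hx0 : x ≠ 0 := fun h => by simp [h] at hx
  have hy0 : y ≠ 0 := fun h => by simp [h] at hy
  have hax : |x.arg| < Real.pi / 2 :=
    Complex.abs_arg_lt_pi_div_two_iff.mpr (Or.inl hx)
  have hay : |y.arg| < Real.pi / 2 :=
    Complex.abs_arg_lt_pi_div_two_iff.mpr (Or.inl hy)
  have h1 := abs_lt.mp hax
  have h2 := abs_lt.mp hay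
  have hlog : Complex.log (x * y) = Complex.log x + Complex.log y := by
    rw [Complex.log_mul_eq_add_log_iff hx0 hy0]
    constructor <;> [linarith [h1.1, h2.1]; linarith [h1.2, h2.2, Real.pi_pos]]
  rw [Complex.cpow_def_of_ne_zero (mul_ne_zero hx0 hy0), hlog, add_mul,
    Complex.exp_add, ← Complex.cpow_def_of_ne_zero hx0,
    ← Complex.cpow_def_of_ne_zero hy0]

lemma pos_re_of_abs_lt {x : ℂ} (hx : ‖x‖ < 1) : 0 < (1 - x).re := by
  have := Complex.abs_re_le_norm x
  have hle : x.re ≤ |x.re| := le_abs_self _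
  simp only [Complex.sub_re, Complex.one_re]
  linarith

lemma conj_cpow_real {x : ℂ} (hx : 0 < x.re) (s : ℝ) :
    conj (x ^ (s : ℂ)) = (conj x) ^ (s : ℂ) := by
  have harg : x.arg ≠ Real.pi := by
    intro h
    have := (Complex.arg_eq_pi_iff.mp h).1
    linarith
  rw [Complex.conj_cpow x _ harg, Complex.conj_ofReal]

/-- Theorem 2.4 (converse direction): for symbols of the stated form with real
parameters `a, c`, the reproducing-kernel identity for Hermitianness holds, and
both sides have the indicated common value. -/
theorem stmt10 (α : ℝ) (hα : -1 < α) (n : ℕ) (hn : 1 ≤ n)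
    (a c : ℝ) (b : ℂ) (hb : b ∈ Metric.ball (0 : ℂ) 1)
    (φ ψ : ℂ → ℂ)
    (hφdef : ∀ z ∈ Metric.ball (0 : ℂ) 1,
      φ z = b + (c : ℂ) * z / (1 - conj b * z))
    (hφmap : ∀ z ∈ Metric.ball (0 : ℂ) 1, φ z ∈ Metric.ball (0 : ℂ) 1)
    (hψdef : ∀ z ∈ Metric.ball (0 : ℂ) 1,
      ψ z = (a : ℂ) * z ^ n / (1 - conj b * z) ^ ((n : ℂ) + α + 2))
    (p : ℂ) (hp : p = ∏ j ∈ Finset.range n, ((α : ℂ) + 2 + j)) :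
    ∀ z ∈ Metric.ball (0 : ℂ) 1, ∀ w ∈ Metric.ball (0 : ℂ) 1,
      p * z ^ n * conj (ψ w) / (1 - z * conj (φ w)) ^ ((n : ℂ) + α + 2)
        = p * (conj w) ^ n * ψ z / (1 - conj w * φ z) ^ ((n : ℂ) + α + 2) ∧
      p * z ^ n * conj (ψ w) / (1 - z * conj (φ w)) ^ ((n : ℂ) + α + 2)
        = (a : ℂ) * p * (z * conj w) ^ n /
            (1 - conj b * z - b * conj w + ((‖b‖ : ℝ) : ℂ) ^ 2 * conj w * z
              - (c : ℂ) * conj w * z) ^ ((n : ℂ) + α + 2) := by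
  intro z hz w hw
  -- basic bounds
  have hza : ‖z‖ < 1 := by
    rwa [Metric.mem_ball, dist_zero_right] at hz
  have hwa : ‖w‖ < 1 := by
    rwa [Metric.mem_ball, dist_zero_right] at hw
  have hba : ‖b‖ < 1 := by
    rwa [Metric.mem_ball, dist_zero_right] at hb
  have hφw : ‖φ w‖ < 1 := by
    have := hφmap w hw
    rwa [Metric.mem_ball, dist_zero_right] at this
  -- exponent is a real coercion
  have hs : ((n : ℂ) + α + 2) = ((((n : ℝ) + α + 2) : ℝ) : ℂ) := by push_cast; ring
  have hφz : ‖φ z‖ < 1 := by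
    have := hφmap z hz
    rwa [Metric.mem_ball, dist_zero_right] at this
  set S : ℝ := (n : ℝ) + α + 2 with hS
  -- the four denominators
  have hu : 0 < (1 - conj b * w).re := by
    apply pos_re_of_abs_lt
    rw [norm_mul, Complex.norm_conj]
    calc ‖b‖ * ‖w‖ ≤ 1 * ‖w‖ :=
          mul_le_mul_of_nonneg_right hba.le (norm_nonneg _)
      _ = ‖w‖ := one_mul _
      _ < 1 := hwa
  have huc : 0 < (conj (1 - conj b * w)).re := by
    rwa [Complex.conj_re]
  have hv : 0 < (1 - z * conj (φ w)).re := by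
    apply pos_re_of_abs_lt
    rw [norm_mul, Complex.norm_conj]
    calc ‖z‖ * ‖φ w‖ ≤ 1 * ‖φ w‖ :=
          mul_le_mul_of_nonneg_right hza.le (norm_nonneg _)
      _ = ‖φ w‖ := one_mul _
      _ < 1 := hφw
  have hu' : 0 < (1 - conj b * z).re := by
    apply pos_re_of_abs_lt
    rw [norm_mul, Complex.norm_conj]
    calc ‖b‖ * ‖z‖ ≤ 1 * ‖z‖ :=
          mul_le_mul_of_nonneg_right hba.le (norm_nonneg _)
      _ = ‖z‖ := one_mul _
      _ < 1 := hza
  have hv' : 0 < (1 - conj w * φ z).re := by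
    apply pos_re_of_abs_lt
    rw [norm_mul, Complex.norm_conj]
    calc ‖w‖ * ‖φ z‖ ≤ 1 * ‖φ z‖ :=
          mul_le_mul_of_nonneg_right hwa.le (norm_nonneg _)
      _ = ‖φ z‖ := one_mul _
      _ < 1 := hφz
  have hune : (1 - conj b * w) ≠ 0 := fun h => by simp [h] at hu
  have hu'ne : (1 - conj b * z) ≠ 0 := fun h => by simp [h] at hu'
  -- |b|^2 as b * conj b
  have habsb : ((‖b‖ : ℝ) : ℂ) ^ 2 = b * conj b := by
    rw [← Complex.ofReal_pow, Complex.sq_norm, Complex.mul_conj']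
    simp [Complex.normSq_eq_norm_sq]
  set D : ℂ := 1 - conj b * z - b * conj w + ((‖b‖ : ℝ) : ℂ) ^ 2 * conj w * z
      - (c : ℂ) * conj w * z with hD
  -- factorization of D,両方とも
  have hucne : conj (1 - conj b * w) ≠ 0 := fun h =>
    hune (by simpa using congrArg conj h)
  have hfac1 : D = conj (1 - conj b * w) * (1 - z * conj (φ w)) := by
    rw [hφdef w hw]
    simp only [map_add, map_mul, map_div₀, map_sub, map_one, Complex.conj_conj,
      Complex.conj_ofReal]
    rw [hD, habsb]
    have hcu : (1 : ℂ) - b * conj w ≠ 0 := fun h =>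
      hune (by simpa using congrArg conj h)
    field_simp
    ring
  have hfac2 : D = (1 - conj b * z) * (1 - conj w * φ z) := by
    rw [hφdef z hz]
    rw [hD, habsb]
    field_simp
    ring
  -- conjugate of ψ w
  have hψw : conj (ψ w) = (a : ℂ) * (conj w) ^ n /
      (conj (1 - conj b * w)) ^ ((n : ℂ) + α + 2) := by
    rw [hψdef w hw, map_div₀, map_mul, map_pow, Complex.conj_ofReal, hs,
      conj_cpow_real hu]
  -- common value computations
  have key1 : p * z ^ n * conj (ψ w) / (1 - z * conj (φ w)) ^ ((n : ℂ) + α + 2)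
      = (a : ℂ) * p * (z * conj w) ^ n / D ^ ((n : ℂ) + α + 2) := by
    have h1 : conj (1 - conj b * w) ^ ((S : ℝ) : ℂ) ≠ 0 := fun h =>
      hucne ((Complex.cpow_eq_zero_iff _ _).mp h).1
    have hvne : (1 - z * conj (φ w)) ≠ 0 := fun h => by simp [h] at hv
    have h2 : (1 - z * conj (φ w)) ^ ((S : ℝ) : ℂ) ≠ 0 := fun h =>
      hvne ((Complex.cpow_eq_zero_iff _ _).mp h).1
    rw [hψw, hfac1, hs, mul_cpow_pos_re huc hv, mul_pow]
    field_simp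
  have key2 : p * (conj w) ^ n * ψ z / (1 - conj w * φ z) ^ ((n : ℂ) + α + 2)
      = (a : ℂ) * p * (z * conj w) ^ n / D ^ ((n : ℂ) + α + 2) := by
    have h1 : (1 - conj b * z) ^ ((S : ℝ) : ℂ) ≠ 0 := fun h =>
      hu'ne ((Complex.cpow_eq_zero_iff _ _).mp h).1
    have hv'ne : (1 - conj w * φ z) ≠ 0 := fun h => by simp [h] at hv'
    have h2 : (1 - conj w * φ z) ^ ((S : ℝ) : ℂ) ≠ 0 := fun h =>
      hv'ne ((Complex.cpow_eq_zero_iff _ _).mp h).1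
    rw [hψdef z hz, hfac2, hs, mul_cpow_pos_re hu' hv', mul_pow]
    field_simp
  exact ⟨key1.trans key2.symm, key1⟩
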